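/- arXiv:2301.12942 — 2 statements merged into one kernel-verified Lean document; each statement's English description precedes it below -/
import Mathlib

section
/- Consider Follow-the-Regularized-Leader with the log-barrier regularizer: let A ≥ 1 be a number of actions, η > 0 a learning rate, and c_1, …, c_T ∈ ℝ^A arbitrary loss vectors (with no lower or upper bound on their entries). Let Ψ(p) = ∑_{i=1}^A ln(1/p_i), and for each t = 1, …, T let x_t be the minimizer over the probability simplex Δ(A) of p ↦ Ψ(p) + η ∑_{t'<t} ⟨p, c_{t'}⟩ (each x_t has strictly positive coordinates). Then for every y ∈ Δ(A) with strictly positive coordinates, ∑_{t=1}^T ⟨x_t − y, c_t⟩ ≤ (Ψ(y) − Ψ(x_1))/η + (η/2) ∑_{t=1}^T ∑_{i=1}^A x_{t,i} c_{t,i}². -/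
open Finset


/-- For `0 < s`, `log s ≥ 1 - 1/s`, i.e. `log (1+v) ≥ v/(1+v)`. -/
lemma log_ge_one_sub_inv {s : ℝ} (hs : 0 < s) : 1 - s⁻¹ ≤ Real.log s := by
  have h := Real.log_le_sub_one_of_pos (x := s⁻¹) (by positivity)
  rw [Real.log_inv] at h
  linarith

/-- `log s ≤ s - 1 - (1-s)^2/2` for `0 < s ≤ 1`. -/
lemma log_ineq_le_one {s : ℝ} (hs : 0 < s) (hs1 : s ≤ 1) :
    (1 - s) ^ 2 / 2 ≤ s - 1 - Real.log s := by
  set f : ℝ → ℝ := fun u => u - 1 - (1 - u) ^ 2 / 2 - Real.log u with hf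
  have hanti : AntitoneOn f (Set.Ioi 0) := by
    apply antitoneOn_of_hasDerivWithinAt_nonpos (f' := fun u => 1 + (1 - u) - u⁻¹)
      (convex_Ioi 0)
    · apply ContinuousOn.sub
      · fun_prop
      · exact Real.continuousOn_log.mono (by intro u hu; simpa using ne_of_gt hu)
    · intro u hu
      rw [interior_Ioi] at hu
      have hu0 : (0:ℝ) < u := hu
      have : HasDerivAt f (1 + (1 - u) - u⁻¹) u := by
        have h1 : HasDerivAt (fun u : ℝ => u - 1 - (1 - u) ^ 2 / 2) (1 + (1 - u)) u := by
          have : HasDerivAt (fun u : ℝ => (1 - u) ^ 2 / 2) ((2 * (1-u)^1 * (-1))/2) u := by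
            exact (((hasDerivAt_id u).const_sub 1).pow 2).div_const 2
          have h2 := ((hasDerivAt_id u).sub_const 1).sub this
          exact h2.congr_deriv (by ring)
        exact h1.sub (Real.hasDerivAt_log (ne_of_gt hu0))
      exact this.hasDerivWithinAt
    · intro u hu
      rw [interior_Ioi] at hu
      have hu0 : (0:ℝ) < u := hu
      have : 1 + (1 - u) - u⁻¹ = -((u - 1)^2 / u) := by field_simp; ring
      rw [this]
      exact neg_nonpos.mpr (by positivity)
  have := hanti (Set.mem_Ioi.2 hs) (Set.mem_Ioi.2 one_pos) hs1
  simp only [hf, Real.log_one] at this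
  linarith

/-- `log s ≤ (s - 1/s)/2` for `1 ≤ s`. -/
lemma log_ineq_ge_one {s : ℝ} (hs : 1 ≤ s) :
    (1 - s) ^ 2 / (2 * s) ≤ s - 1 - Real.log s := by
  have hs0 : (0:ℝ) < s := lt_of_lt_of_le one_pos hs
  set f : ℝ → ℝ := fun u => u - u⁻¹ - 2 * Real.log u with hf
  have hmono : MonotoneOn f (Set.Ioi 0) := by
    apply monotoneOn_of_hasDerivWithinAt_nonneg (f' := fun u => 1 + u⁻¹^2 - 2 * u⁻¹)
      (convex_Ioi 0)
    · apply ContinuousOn.sub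
      · apply ContinuousOn.sub continuousOn_id
        exact continuousOn_inv₀.mono (by intro u hu; simpa using ne_of_gt hu)
      · exact continuousOn_const.mul
          (Real.continuousOn_log.mono (by intro u hu; simpa using ne_of_gt hu))
    · intro u hu
      rw [interior_Ioi] at hu
      have hu0 : (0:ℝ) < u := hu
      have : HasDerivAt f (1 + u⁻¹^2 - 2 * u⁻¹) u := by
        have h1 : HasDerivAt (fun u : ℝ => u - u⁻¹) (1 - (-(u^2)⁻¹)) u :=
          (hasDerivAt_id u).sub (hasDerivAt_inv (ne_of_gt hu0))
        have h2 : HasDerivAt (fun u : ℝ => 2 * Real.log u) (2 * u⁻¹) u :=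
          (Real.hasDerivAt_log (ne_of_gt hu0)).const_mul 2
        have := h1.sub h2
        exact this.congr_deriv (by ring)
      exact this.hasDerivWithinAt
    · intro u hu
      rw [interior_Ioi] at hu
      have hu0 : (0:ℝ) < u := hu
      have : 1 + u⁻¹^2 - 2 * u⁻¹ = (1 - u⁻¹)^2 := by ring
      rw [this]; positivity
  have := hmono (Set.mem_Ioi.2 one_pos) (Set.mem_Ioi.2 hs0) hs
  simp only [hf, Real.log_one] at this
  have hlog : 2 * Real.log s ≤ s - s⁻¹ := by simpa using this
  have heq : (1 - s)^2 / (2*s) = s - 1 - (s - s⁻¹)/2 := by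
    field_simp
    ring
  linarith



lemma log_quad_lb {v : ℝ} (hv1 : -(1/2) ≤ v) (hv2 : v ≤ 1/2) :
    v - 2 * v ^ 2 ≤ Real.log (1 + v) := by
  have h1v : 0 < 1 + v := by linarith
  have hlb := log_ge_one_sub_inv h1v
  have h3 : 1 - (1 + v)⁻¹ = v / (1 + v) := by field_simp; ring
  have h4 : v - 2 * v ^ 2 ≤ v / (1 + v) := by
    rw [le_div_iff₀ h1v]
    nlinarith [sq_nonneg v]
  rw [h3] at hlb
  linarith

lemma coord_ineq {x z a : ℝ} (hx : 0 < x) (hx1 : x ≤ 1) (hz : 0 < z) (hz1 : z ≤ 1) :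
    (x - z) * a ≤ (z / x - 1 - Real.log (z / x)) + x * a ^ 2 / 2 := by
  have hx0 : x ≠ 0 := ne_of_gt hx
  have hz0 : z ≠ 0 := ne_of_gt hz
  have hs : 0 < z / x := div_pos hz hx
  have hq : (x - z) * a - x * a ^ 2 / 2 ≤ (x - z) ^ 2 / (2 * x) := by
    rw [le_div_iff₀ (by positivity : (0:ℝ) < 2 * x)]
    nlinarith [sq_nonneg (x - z - x * a)]
  have hfrac : 1 - z / x = (x - z) / x := by field_simp
  have key : (x - z) ^ 2 / (2 * x) ≤ z / x - 1 - Real.log (z / x) := by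
    rcases le_total (z / x) 1 with h | h
    · have hlog := log_ineq_le_one hs h
      have heq : (1 - z / x) ^ 2 / 2 = (x - z) ^ 2 / (2 * x ^ 2) := by
        rw [hfrac, div_pow]
        ring
      have hmono : (x - z) ^ 2 / (2 * x) ≤ (x - z) ^ 2 / (2 * x ^ 2) :=
        div_le_div_of_nonneg_left (sq_nonneg _) (by positivity) (by nlinarith)
      linarith
    · have hlog := log_ineq_ge_one h
      have heq : (1 - z / x) ^ 2 / (2 * (z / x)) = (x - z) ^ 2 / (2 * x * z) := by
        rw [hfrac, div_pow]
        field_simp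
      have hmono : (x - z) ^ 2 / (2 * x) ≤ (x - z) ^ 2 / (2 * x * z) :=
        div_le_div_of_nonneg_left (sq_nonneg _) (by positivity) (by nlinarith)
      linarith
  linarith

lemma bregman {A : ℕ} {x z M : Fin A → ℝ} (hx : ∀ i, 0 < x i) (hz : ∀ i, 0 < z i)
    (hxs : ∑ i, x i = 1) (hzs : ∑ i, z i = 1)
    (hmin : ∀ p : Fin A → ℝ, (∀ i, 0 < p i) → (∑ i, p i = 1) →
      (∑ i, Real.log (1 / x i)) + ∑ i, x i * M i ≤
      (∑ i, Real.log (1 / p i)) + ∑ i, p i * M i) :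
    ∑ i, (z i / x i - 1 - Real.log (z i / x i)) ≤
      ((∑ i, Real.log (1 / z i)) + ∑ i, z i * M i)
        - ((∑ i, Real.log (1 / x i)) + ∑ i, x i * M i) := by
  set K : ℝ := ∑ i, (z i / x i - 1) ^ 2 with hK
  set U : ℝ := ∑ i, |z i / x i - 1| with hU
  set S : ℝ := ∑ i, (z i - x i) * M i with hS
  have hU0 : 0 ≤ U := Finset.sum_nonneg fun i _ => abs_nonneg _
  have hUi : ∀ i, |z i / x i - 1| ≤ U := fun i =>
    Finset.single_le_sum (fun j _ => abs_nonneg (z j / x j - 1)) (mem_univ i)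
  set lam : ℝ := 1 / (2 * (U + 1)) with hlam
  have hlam0 : 0 < lam := by positivity
  have hev : ∀ l ∈ Set.Ioo (0:ℝ) lam, (∑ i, (z i / x i - 1)) - 2 * l * K ≤ S := by
    intro l hl
    obtain ⟨hl0, hllam⟩ := hl
    have habs : ∀ i, |l * (z i / x i - 1)| ≤ 1 / 2 := by
      intro i
      have h1 : |l * (z i / x i - 1)| = l * |z i / x i - 1| := by
        rw [abs_mul, abs_of_pos hl0]
      have h2 : l * |z i / x i - 1| ≤ lam * (U + 1) :=
        mul_le_mul (le_of_lt hllam) (by linarith [hUi i]) (abs_nonneg _) (le_of_lt hlam0)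
      have h3 : lam * (U + 1) = 1 / 2 := by
        rw [hlam]
        field_simp
      rw [h1]
      linarith
    have hl12 : l < 1 := by
      have : lam ≤ 1 / 2 := by
        rw [hlam, div_le_div_iff₀ (by positivity) (by norm_num)]
        linarith
      linarith
    have hw_pos : ∀ i, 0 < x i + l * (z i - x i) := by
      intro i
      have hrw : x i + l * (z i - x i) = (1 - l) * x i + l * z i := by ring
      rw [hrw]
      exact add_pos (mul_pos (by linarith) (hx i)) (mul_pos hl0 (hz i))
    have hw_sum : ∑ i, (x i + l * (z i - x i)) = 1 := by
      rw [Finset.sum_add_distrib, hxs, ← Finset.mul_sum, Finset.sum_sub_distrib, hxs, hzs]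
      ring
    have hm := hmin (fun i => x i + l * (z i - x i)) hw_pos hw_sum
    have hwM : ∑ i, (x i + l * (z i - x i)) * M i = (∑ i, x i * M i) + l * S := by
      rw [hS, Finset.mul_sum, ← Finset.sum_add_distrib]
      exact Finset.sum_congr rfl fun i _ => by ring
    have hlogw : ∀ i, Real.log (1 / (x i + l * (z i - x i)))
        = Real.log (1 / x i) - Real.log (1 + l * (z i / x i - 1)) := by
      intro i
      have h1 : 1 + l * (z i / x i - 1) = (x i + l * (z i - x i)) / x i := by
        field_simp [ne_of_gt (hx i)]
      rw [h1, one_div, one_div, Real.log_inv, Real.log_inv,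
        Real.log_div (ne_of_gt (hw_pos i)) (ne_of_gt (hx i))]
      ring
    have hlogsum : ∑ i, Real.log (1 / (x i + l * (z i - x i)))
        = (∑ i, Real.log (1 / x i)) - ∑ i, Real.log (1 + l * (z i / x i - 1)) := by
      rw [← Finset.sum_sub_distrib]
      exact Finset.sum_congr rfl fun i _ => hlogw i
    have hstep : ∑ i, Real.log (1 + l * (z i / x i - 1)) ≤ l * S := by
      rw [hlogsum, hwM] at hm
      linarith
    have hsum_lb : l * (∑ i, (z i / x i - 1)) - 2 * l ^ 2 * K
        ≤ ∑ i, Real.log (1 + l * (z i / x i - 1)) := by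
      have hrw : ∑ i, (l * (z i / x i - 1) - 2 * (l * (z i / x i - 1)) ^ 2)
          = l * (∑ i, (z i / x i - 1)) - 2 * l ^ 2 * K := by
        rw [Finset.sum_sub_distrib, Finset.mul_sum, hK, Finset.mul_sum]
        congr 1
        exact Finset.sum_congr rfl fun i _ => by ring
      rw [← hrw]
      refine Finset.sum_le_sum fun i _ => ?_
      have hv := abs_le.1 (habs i)
      exact log_quad_lb hv.1 hv.2
    have h5 : l * ((∑ i, (z i / x i - 1)) - 2 * l * K) ≤ l * S := by
      have hexp : l * ((∑ i, (z i / x i - 1)) - 2 * l * K)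
          = l * (∑ i, (z i / x i - 1)) - 2 * l ^ 2 * K := by ring
      rw [hexp]
      linarith
    exact le_of_mul_le_mul_left h5 hl0
  have hcont : Continuous (fun l : ℝ => (∑ i, (z i / x i - 1)) - 2 * l * K) := by fun_prop
  have htend : Filter.Tendsto (fun l : ℝ => (∑ i, (z i / x i - 1)) - 2 * l * K)
      (nhdsWithin 0 (Set.Ioi 0)) (nhds ((∑ i, (z i / x i - 1)) - 2 * 0 * K)) :=
    (hcont.tendsto 0).mono_left nhdsWithin_le_nhds
  have hev' : ∀ᶠ l in nhdsWithin (0:ℝ) (Set.Ioi 0),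
      (∑ i, (z i / x i - 1)) - 2 * l * K ≤ S :=
    Filter.eventually_of_mem (Ioo_mem_nhdsGT_of_mem ⟨le_refl (0:ℝ), hlam0⟩) hev
  have hkey : (∑ i, (z i / x i - 1)) - 2 * 0 * K ≤ S := le_of_tendsto htend hev'
  have key : ∑ i, (z i / x i - 1) ≤ S := by linarith
  have e1 : (∑ i, Real.log (1 / z i)) - ∑ i, Real.log (1 / x i)
      = ∑ i, -Real.log (z i / x i) := by
    rw [← Finset.sum_sub_distrib]
    refine Finset.sum_congr rfl fun i _ => ?_
    rw [one_div, one_div, Real.log_inv, Real.log_inv,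
      Real.log_div (ne_of_gt (hz i)) (ne_of_gt (hx i))]
    ring
  have e2 : (∑ i, z i * M i) - ∑ i, x i * M i = S := by
    rw [hS, ← Finset.sum_sub_distrib]
    exact Finset.sum_congr rfl fun i _ => by ring
  have e3 : ∑ i, (z i / x i - 1 - Real.log (z i / x i))
      = (∑ i, (z i / x i - 1)) + ∑ i, -Real.log (z i / x i) := by
    rw [← Finset.sum_add_distrib]
    exact Finset.sum_congr rfl fun i _ => by ring
  linarith

/-- Regret bound for Follow-the-Regularized-Leader with the log-barrier regularizer,
with arbitrary (possibly very negative) loss vectors. -/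

theorem ftrl_log_barrier_regret
    (A T : ℕ) (hA : 1 ≤ A) (hT : 0 < T) (η : ℝ) (hη : 0 < η)
    (c : Fin T → Fin A → ℝ) (x : Fin T → Fin A → ℝ)
    (hx_pos : ∀ t i, 0 < x t i)
    (hx_sum : ∀ t, ∑ i, x t i = 1)
    (hx_min : ∀ t : Fin T, ∀ p : Fin A → ℝ, (∀ i, 0 < p i) → (∑ i, p i = 1) →
      (∑ i, Real.log (1 / x t i))
          + η * ∑ t' ∈ Finset.univ.filter (fun t' => t' < t), ∑ i, x t i * c t' i
        ≤ (∑ i, Real.log (1 / p i))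
          + η * ∑ t' ∈ Finset.univ.filter (fun t' => t' < t), ∑ i, p i * c t' i)
    (y : Fin A → ℝ) (hy_pos : ∀ i, 0 < y i) (hy_sum : ∑ i, y i = 1) :
    ∑ t, ∑ i, (x t i - y i) * c t i ≤
      ((∑ i, Real.log (1 / y i)) - (∑ i, Real.log (1 / x ⟨0, hT⟩ i))) / η
        + (η / 2) * ∑ t, ∑ i, x t i * (c t i) ^ 2 := by
  classical
  have hcoord_le_one : ∀ t : Fin T, ∀ i, x t i ≤ 1 := by
    intro t i
    have h := Finset.single_le_sum (f := fun j => x t j)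
      (fun j _ => le_of_lt (hx_pos t j)) (mem_univ i)
    rw [hx_sum t] at h
    exact h
  have main : ∀ s : ℕ, s ≤ T → ∀ z : Fin A → ℝ, (∀ i, 0 < z i) → (∑ i, z i = 1) →
      (∑ i, Real.log (1 / x ⟨0, hT⟩ i))
        + ∑ t ∈ Finset.univ.filter (fun t : Fin T => (t : ℕ) < s),
            ∑ i, (x t i - z i) * (η * c t i)
      ≤ (∑ i, Real.log (1 / z i))
        + ∑ t ∈ Finset.univ.filter (fun t : Fin T => (t : ℕ) < s),
            (∑ i, x t i * (η * c t i) ^ 2) / 2 := by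
    intro s
    induction s with
    | zero =>
      intro _ z hz hzs
      have h0 : Finset.univ.filter (fun t : Fin T => (t : ℕ) < 0) = ∅ := by
        apply Finset.filter_false_of_mem
        intro t _
        omega
      have he : Finset.univ.filter (fun t' : Fin T => t' < (⟨0, hT⟩ : Fin T)) = ∅ := by
        apply Finset.filter_false_of_mem
        intro t _
        simp [Fin.lt_def]
      have hm := hx_min ⟨0, hT⟩ z hz hzs
      rw [he] at hm
      simp only [Finset.sum_empty, mul_zero, add_zero] at hm
      rw [h0]
      simpa using hm
    | succ s ih =>
      intro hsT z hz hzs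
      have hzle1 : ∀ i, z i ≤ 1 := by
        intro i
        have h := Finset.single_le_sum (f := fun j => z j)
          (fun j _ => le_of_lt (hz j)) (mem_univ i)
        rw [hzs] at h
        exact h
      have hsT' : s < T := hsT
      set ts : Fin T := ⟨s, hsT'⟩ with hts
      set F : Finset (Fin T) := Finset.univ.filter (fun t : Fin T => (t : ℕ) < s) with hF
      have hval : (ts : ℕ) = s := rfl
      have hnotmem : ts ∉ F := by
        simp [hF, hval]
      have hins : Finset.univ.filter (fun t : Fin T => (t : ℕ) < s + 1) = insert ts F := by
        ext t
        simp only [hF, Finset.mem_filter, Finset.mem_univ, true_and, Finset.mem_insert,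
          Fin.ext_iff, hval]
        omega
      set Ms : Fin A → ℝ := fun i => η * ∑ t' ∈ F, c t' i with hMs
      -- convert hx_min at ts to abstract form
      have hswap : ∀ p : Fin A → ℝ,
          η * ∑ t' ∈ F, ∑ i, p i * c t' i = ∑ i, p i * Ms i := by
        intro p
        rw [Finset.sum_comm, Finset.mul_sum]
        refine Finset.sum_congr rfl fun i _ => ?_
        show η * ∑ t' ∈ F, p i * c t' i = p i * (η * ∑ t' ∈ F, c t' i)
        rw [← Finset.mul_sum]
        ring
      have hfilter_eq : Finset.univ.filter (fun t' : Fin T => t' < ts) = F := by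
        rw [hF]
        apply Finset.filter_congr
        intro t _
        simp [Fin.lt_def, hval]
      have hmin' : ∀ p : Fin A → ℝ, (∀ i, 0 < p i) → (∑ i, p i = 1) →
          (∑ i, Real.log (1 / x ts i)) + ∑ i, x ts i * Ms i ≤
          (∑ i, Real.log (1 / p i)) + ∑ i, p i * Ms i := by
        intro p hp hps
        have hm := hx_min ts p hp hps
        rw [hfilter_eq, hswap (x ts), hswap p] at hm
        exact hm
      have hB := bregman (hx_pos ts) hz (hx_sum ts) hzs hmin'
      -- Lemma A at step ts
      have hA3 : ∑ i, (x ts i - z i) * (η * c ts i)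
          ≤ (∑ i, (z i / x ts i - 1 - Real.log (z i / x ts i)))
            + (∑ i, x ts i * (η * c ts i) ^ 2) / 2 := by
        have hsum := Finset.sum_le_sum (s := Finset.univ)
          (f := fun i => (x ts i - z i) * (η * c ts i))
          (g := fun i => (z i / x ts i - 1 - Real.log (z i / x ts i))
            + x ts i * (η * c ts i) ^ 2 / 2)
          (fun i _ => coord_ineq (a := η * c ts i)
            (hx_pos ts i) (hcoord_le_one ts i) (hz i) (hzle1 i))
        rw [Finset.sum_add_distrib] at hsum
        rw [Finset.sum_div]
        exact hsum
      have hIH := ih (le_of_lt hsT') (x ts) (hx_pos ts) (hx_sum ts)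
      -- splitting equalities
      have hsplit : ∑ t ∈ F, ∑ i, (x t i - z i) * (η * c t i)
          = (∑ t ∈ F, ∑ i, (x t i - x ts i) * (η * c t i))
            + ∑ t ∈ F, ∑ i, (x ts i - z i) * (η * c t i) := by
        rw [← Finset.sum_add_distrib]
        refine Finset.sum_congr rfl fun t _ => ?_
        rw [← Finset.sum_add_distrib]
        exact Finset.sum_congr rfl fun i _ => by ring
      have hMs_eq : ∑ t ∈ F, ∑ i, (x ts i - z i) * (η * c t i)
          = (∑ i, x ts i * Ms i) - ∑ i, z i * Ms i := by
        rw [Finset.sum_comm, ← Finset.sum_sub_distrib]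
        refine Finset.sum_congr rfl fun i _ => ?_
        show ∑ t ∈ F, (x ts i - z i) * (η * c t i)
            = x ts i * (η * ∑ t' ∈ F, c t' i) - z i * (η * ∑ t' ∈ F, c t' i)
        have h1 : ∑ t ∈ F, (x ts i - z i) * (η * c t i)
            = ((x ts i - z i) * η) * ∑ t ∈ F, c t i := by
          rw [Finset.mul_sum]
          exact Finset.sum_congr rfl fun t _ => by ring
        rw [h1]
        ring
      rw [hins, Finset.sum_insert hnotmem, Finset.sum_insert hnotmem]
      linarith [hIH, hB, hA3, hsplit, hMs_eq]
  -- conclude from main at s = T, z = y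
  have huniv : Finset.univ.filter (fun t : Fin T => (t : ℕ) < T) = Finset.univ := by
    apply Finset.filter_true_of_mem
    intro t _
    exact t.isLt
  have hmain := main T le_rfl y hy_pos hy_sum
  rw [huniv] at hmain
  have hA1 : ∑ t, ∑ i, (x t i - y i) * (η * c t i)
      = η * ∑ t, ∑ i, (x t i - y i) * c t i := by
    rw [Finset.mul_sum]
    refine Finset.sum_congr rfl fun t _ => ?_
    rw [Finset.mul_sum]
    exact Finset.sum_congr rfl fun i _ => by ring
  have hA2 : ∑ t, (∑ i, x t i * (η * c t i) ^ 2) / 2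
      = η ^ 2 / 2 * ∑ t, ∑ i, x t i * (c t i) ^ 2 := by
    rw [Finset.mul_sum]
    refine Finset.sum_congr rfl fun t _ => ?_
    rw [Finset.mul_sum, Finset.sum_div]
    exact Finset.sum_congr rfl fun i _ => by ring
  rw [hA1, hA2] at hmain
  set L : ℝ := ∑ t, ∑ i, (x t i - y i) * c t i with hL
  set R : ℝ := ∑ t, ∑ i, x t i * (c t i) ^ 2 with hR
  set Py : ℝ := ∑ i, Real.log (1 / y i) with hPy
  set P0 : ℝ := ∑ i, Real.log (1 / x ⟨0, hT⟩ i) with hP0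
  have hgoal : η * L ≤ (Py - P0) + η ^ 2 / 2 * R := by linarith
  calc L = (η * L) / η := (mul_div_cancel_left₀ L (ne_of_gt hη)).symm
    _ ≤ ((Py - P0) + η ^ 2 / 2 * R) / η := by
        gcongr
    _ = (Py - P0) / η + η / 2 * R := by
        field_simp
end

section
/- Consider the Hedge (exponential weights) algorithm: let A ≥ 1, η > 0, and c_1, …, c_T ∈ ℝ^A be loss vectors satisfying η c_{t,i} ≥ −1 for all t ∈ [T] and i ∈ [A]. For t = 1, …, T define x_t ∈ Δ(A) by x_{t,i} = exp(−η ∑_{t'<t} c_{t',i}) / ∑_{i'=1}^A exp(−η ∑_{t'<t} c_{t',i'}) (so x_1 is the uniform distribution). Then for every distribution y ∈ Δ(A), ∑_{t=1}^T ⟨x_t − y, c_t⟩ ≤ (ln A)/η + η ∑_{t=1}^T ∑_{i=1}^A x_{t,i} c_{t,i}². -/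
open Finset

lemma exp_le_one_add_add_sq {x : ℝ} (hx : x ≤ 1) :
    Real.exp x ≤ 1 + x + x ^ 2 := by
  rcases le_or_gt x (-1) with h | h
  · have h1 : Real.exp x ≤ Real.exp (-1) := Real.exp_le_exp.2 h
    have h2 : Real.exp (-1) ≤ 1 := Real.exp_le_one_iff.2 (by norm_num)
    nlinarith [sq_nonneg x, mul_nonneg (neg_nonneg.2 (le_of_lt (lt_of_le_of_lt h (by norm_num)))) (neg_nonneg.2 (by linarith : x + 1 ≤ 0))]
  · have habs : |x| ≤ 1 := abs_le.2 ⟨le_of_lt h, hx⟩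
    have hb := Real.exp_bound habs (n := 2) (by norm_num)
    have hsum : ∑ i ∈ Finset.range 2, x ^ i / (Nat.factorial i : ℝ) = 1 + x := by
      simp [Finset.sum_range_succ, Nat.factorial]
    rw [hsum] at hb
    have habs2 : |x| ^ 2 = x ^ 2 := sq_abs x
    have h3 : Real.exp x - (1 + x) ≤ x ^ 2 * ((2 + 1 : ℕ) / ((Nat.factorial 2 : ℝ) * 2)) := by
      calc Real.exp x - (1 + x) ≤ |Real.exp x - (1 + x)| := le_abs_self _
        _ ≤ |x| ^ 2 * ((2 + 1 : ℕ) / ((Nat.factorial 2 : ℝ) * 2)) := hb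
        _ = x ^ 2 * ((2 + 1 : ℕ) / ((Nat.factorial 2 : ℝ) * 2)) := by rw [habs2]
    have : ((2 + 1 : ℕ) : ℝ) / ((Nat.factorial 2 : ℝ) * 2) = 3 / 4 := by
      norm_num [Nat.factorial]
    rw [this] at h3
    nlinarith [sq_nonneg x]

set_option maxHeartbeats 1600000

/-- Regret bound for the Hedge (exponential weights) algorithm, for loss vectors
satisfying `η * c t i ≥ -1`. -/
theorem hedge_regret
    (A T : ℕ) (hA : 1 ≤ A) (η : ℝ) (hη : 0 < η)
    (c : Fin T → Fin A → ℝ) (hc : ∀ t i, η * c t i ≥ -1)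
    (x : Fin T → Fin A → ℝ)
    (hx : ∀ t i, x t i =
      Real.exp (-η * ∑ t' ∈ Finset.univ.filter (fun t' => t' < t), c t' i)
        / ∑ i', Real.exp (-η * ∑ t' ∈ Finset.univ.filter (fun t' => t' < t), c t' i'))
    (y : Fin A → ℝ) (hy_nonneg : ∀ i, 0 ≤ y i) (hy_sum : ∑ i, y i = 1) :
    ∑ t, ∑ i, (x t i - y i) * c t i
      ≤ Real.log A / η + η * ∑ t, ∑ i, x t i * (c t i) ^ 2 := by
  haveI : Nonempty (Fin A) := Fin.pos_iff_nonempty.1 hA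
  have hApos : (0 : ℝ) < A := by exact_mod_cast Nat.lt_of_lt_of_le Nat.zero_lt_one hA
  set L : ℕ → Fin A → ℝ :=
    fun n i => ∑ t' ∈ Finset.univ.filter (fun t' : Fin T => (t' : ℕ) < n), c t' i with hLdef
  set W : ℕ → ℝ := fun n => ∑ i, Real.exp (-η * L n i) with hWdef
  have hWpos : ∀ n, 0 < W n :=
    fun n => Finset.sum_pos (fun i _ => Real.exp_pos _) Finset.univ_nonempty
  have hx' : ∀ (t : Fin T) (i : Fin A),
      x t i = Real.exp (-η * L t.val i) / W t.val := by
    intro t i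
    rw [hx]
    rfl
  have hxpos : ∀ (t : Fin T) (i : Fin A), 0 < x t i := by
    intro t i
    rw [hx']
    positivity
  have hxW : ∀ (t : Fin T) (i : Fin A),
      Real.exp (-η * L t.val i) = x t i * W t.val := by
    intro t i
    rw [hx']
    field_simp
    exact (div_self (ne_of_gt (hWpos _))).symm
  have hxsum : ∀ t : Fin T, ∑ i, x t i = 1 := by
    intro t
    have : ∑ i, x t i = (∑ i, Real.exp (-η * L t.val i)) / W t.val := by
      rw [Finset.sum_div]
      exact Finset.sum_congr rfl fun i _ => hx' t i
    rw [this]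
    exact div_self (ne_of_gt (hWpos _))
  have hLsucc : ∀ (t : Fin T) (i : Fin A), L (t.val + 1) i = L t.val i + c t i := by
    intro t i
    have hset : (Finset.univ.filter (fun t' : Fin T => (t' : ℕ) < t.val + 1))
        = insert t (Finset.univ.filter (fun t' : Fin T => (t' : ℕ) < t.val)) := by
      ext t'
      simp only [Finset.mem_filter, Finset.mem_univ, true_and, Finset.mem_insert,
        Nat.lt_succ_iff_lt_or_eq, Fin.ext_iff]
      tauto
    simp only [hLdef, hset]
    rw [Finset.sum_insert (by simp)]
    ring
  have hstep : ∀ t : Fin T,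
      W (t.val + 1) = W t.val * ∑ i, x t i * Real.exp (-η * c t i) := by
    intro t
    calc W (t.val + 1) = ∑ i, Real.exp (-η * L t.val i) * Real.exp (-η * c t i) := by
          refine Finset.sum_congr rfl fun i _ => ?_
          rw [← Real.exp_add, hLsucc]
          ring_nf
      _ = ∑ i, (x t i * W t.val) * Real.exp (-η * c t i) := by
          refine Finset.sum_congr rfl fun i _ => ?_
          rw [hxW]
      _ = W t.val * ∑ i, x t i * Real.exp (-η * c t i) := by
          rw [Finset.mul_sum]
          exact Finset.sum_congr rfl fun i _ => by ring
  have hlog : ∀ t : Fin T,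
      Real.log (W (t.val + 1)) - Real.log (W t.val)
        ≤ -η * (∑ i, x t i * c t i) + η ^ 2 * ∑ i, x t i * (c t i) ^ 2 := by
    intro t
    have hpt : ∀ i : Fin A, x t i * Real.exp (-η * c t i)
        ≤ x t i * (1 + (-η * c t i) + (-η * c t i) ^ 2) := by
      intro i
      refine mul_le_mul_of_nonneg_left ?_ (le_of_lt (hxpos t i))
      exact exp_le_one_add_add_sq (by nlinarith [hc t i])
    have h1 : ∑ i, x t i * Real.exp (-η * c t i)
        ≤ 1 + (-η * (∑ i, x t i * c t i) + η ^ 2 * ∑ i, x t i * (c t i) ^ 2) := by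
      calc ∑ i, x t i * Real.exp (-η * c t i)
          ≤ ∑ i, x t i * (1 + (-η * c t i) + (-η * c t i) ^ 2) :=
            Finset.sum_le_sum fun i _ => hpt i
        _ = (∑ i, x t i) + (-η) * (∑ i, x t i * c t i)
              + η ^ 2 * ∑ i, x t i * (c t i) ^ 2 := by
            rw [Finset.mul_sum, Finset.mul_sum, ← Finset.sum_add_distrib,
              ← Finset.sum_add_distrib]
            exact Finset.sum_congr rfl fun i _ => by ring
        _ = 1 + (-η * (∑ i, x t i * c t i) + η ^ 2 * ∑ i, x t i * (c t i) ^ 2) := by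
            rw [hxsum]
            ring
    have hpos : 0 < ∑ i, x t i * Real.exp (-η * c t i) :=
      Finset.sum_pos (fun i _ => mul_pos (hxpos t i) (Real.exp_pos _))
        Finset.univ_nonempty
    have h2 : Real.log (W (t.val + 1)) - Real.log (W t.val)
        = Real.log (∑ i, x t i * Real.exp (-η * c t i)) := by
      rw [hstep, Real.log_mul (ne_of_gt (hWpos _)) (ne_of_gt hpos)]
      ring
    rw [h2]
    have h3 := Real.log_le_sub_one_of_pos hpos
    linarith
  -- telescoping
  have tele : Real.log (W T) - Real.log (W 0)
      = ∑ t : Fin T, (Real.log (W (t.val + 1)) - Real.log (W t.val)) := by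
    rw [Fin.sum_univ_eq_sum_range (fun n => Real.log (W (n + 1)) - Real.log (W n))]
    exact (Finset.sum_range_sub (fun n => Real.log (W n)) T).symm
  have key1 : Real.log (W T) - Real.log (W 0)
      ≤ -η * (∑ t, ∑ i, x t i * c t i) + η ^ 2 * ∑ t, ∑ i, x t i * (c t i) ^ 2 := by
    rw [tele]
    calc ∑ t : Fin T, (Real.log (W (t.val + 1)) - Real.log (W t.val))
        ≤ ∑ t : Fin T, (-η * (∑ i, x t i * c t i) + η ^ 2 * ∑ i, x t i * (c t i) ^ 2) :=
          Finset.sum_le_sum fun t _ => hlog t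
      _ = -η * (∑ t, ∑ i, x t i * c t i) + η ^ 2 * ∑ t, ∑ i, x t i * (c t i) ^ 2 := by
          rw [Finset.sum_add_distrib, ← Finset.mul_sum, ← Finset.mul_sum]
  have hW0 : W 0 = A := by
    have : ∀ i : Fin A, L 0 i = 0 := by
      intro i
      simp [hLdef]
    simp [hWdef, this]
  have hLT : ∀ i : Fin A, L T i = ∑ t, c t i := by
    intro i
    simp only [hLdef]
    congr 1
    apply Finset.filter_true_of_mem
    intro t' _
    exact t'.isLt
  have key2 : -η * (∑ t, ∑ i, y i * c t i) ≤ Real.log (W T) := by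
    have hb : ∀ i : Fin A, -η * L T i ≤ Real.log (W T) := by
      intro i
      refine (Real.le_log_iff_exp_le (hWpos T)).2 ?_
      exact Finset.single_le_sum (f := fun j => Real.exp (-η * L T j))
        (fun j _ => le_of_lt (Real.exp_pos _)) (Finset.mem_univ i)
    have hyL : ∑ t, ∑ i, y i * c t i = ∑ i, y i * L T i := by
      rw [Finset.sum_comm]
      exact Finset.sum_congr rfl fun i _ => by rw [hLT, Finset.mul_sum]
    calc -η * (∑ t, ∑ i, y i * c t i) = ∑ i, y i * (-η * L T i) := by
          rw [hyL, Finset.mul_sum]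
          exact Finset.sum_congr rfl fun i _ => by ring
      _ ≤ ∑ i, y i * Real.log (W T) :=
          Finset.sum_le_sum fun i _ => mul_le_mul_of_nonneg_left (hb i) (hy_nonneg i)
      _ = Real.log (W T) := by rw [← Finset.sum_mul, hy_sum, one_mul]
  have hsplit : ∑ t, ∑ i, (x t i - y i) * c t i
      = (∑ t, ∑ i, x t i * c t i) - ∑ t, ∑ i, y i * c t i := by
    rw [← Finset.sum_sub_distrib]
    refine Finset.sum_congr rfl fun t _ => ?_
    rw [← Finset.sum_sub_distrib]
    exact Finset.sum_congr rfl fun i _ => by ring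
  rw [hsplit]
  rw [hW0] at key1
  have hmain : η * ((∑ t, ∑ i, x t i * c t i) - ∑ t, ∑ i, y i * c t i)
      ≤ Real.log A + η * (η * ∑ t, ∑ i, x t i * (c t i) ^ 2) := by
    nlinarith [key1, key2]
  rw [← mul_le_mul_iff_right₀ hη, mul_add, mul_div_cancel₀ _ (ne_of_gt hη)]
  linarith
end
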